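/- Partition ℕ into consecutive intervals I_k where I_k has length 2k. For x assigning to each k a k-element subset x(k) ⊆ I_k, define aˣₙ = 1/k² if n ∈ x(k) and aˣₙ = −1/k² if n ∈ I_k \ x(k). Then for every such x, the series ∑ₙ aˣₙ converges conditionally to 0. -/

import Mathlib

open Filter Topology

/-- Partial sums of the subseries of `a` over the set `A`, up to index `m`. -/
noncomputable def psum (a : ℕ → ℝ) (A : Set ℕ) (m : ℕ) : ℝ :=
  ∑ n ∈ Finset.range (m + 1), Set.indicator A a n

/-- A series `∑ aₙ` is conditionally convergent: its partial sums converge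
but the partial sums of `∑ |aₙ|` tend to infinity. -/
def CondConv (a : ℕ → ℝ) : Prop :=
  (∃ L : ℝ, Tendsto (fun m => ∑ n ∈ Finset.range m, a n) atTop (𝓝 L)) ∧
  Tendsto (fun m => ∑ n ∈ Finset.range m, |a n|) atTop atTop

section Aux
variable (x : ℕ → Finset ℕ) (a : ℕ → ℝ)
variable (hx : ∀ k, 1 ≤ k → x k ⊆ Finset.Icc (k * (k - 1) + 1) (k * (k + 1)) ∧ (x k).card = k)
variable (ha0 : a 0 = 0)
variable (ha : ∀ k, 1 ≤ k → ∀ n ∈ Finset.Icc (k * (k - 1) + 1) (k * (k + 1)),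
      a n = if n ∈ x k then 1 / (k : ℝ) ^ 2 else -1 / (k : ℝ) ^ 2)

lemma card_block (k : ℕ) (hk : 1 ≤ k) :
    (Finset.Icc (k * (k - 1) + 1) (k * (k + 1))).card = 2 * k := by
  obtain ⟨m, rfl⟩ := Nat.exists_eq_add_of_le hk
  rw [Nat.card_Icc]
  have h1 : (1 + m) - 1 = m := by omega
  rw [h1]
  have : (1 + m) * (1 + m + 1) = (1 + m) * m + 2 * (1 + m) := by ring
  omega

include ha in
lemma abs_block (k : ℕ) (hk : 1 ≤ k) (n : ℕ)
    (hn : n ∈ Finset.Icc (k * (k - 1) + 1) (k * (k + 1))) :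
    |a n| = 1 / (k : ℝ) ^ 2 := by
  have hkpos : (0:ℝ) < (k:ℝ) ^ 2 := by positivity
  rw [ha k hk n hn]
  split_ifs with h
  · rw [abs_of_pos (by positivity)]
  · rw [neg_div, abs_neg, abs_of_pos (by positivity)]

include hx ha in
lemma block_sum (k : ℕ) (hk : 1 ≤ k) :
    ∑ n ∈ Finset.Icc (k * (k - 1) + 1) (k * (k + 1)), a n = 0 := by
  obtain ⟨hsub, hcard⟩ := hx k hk
  have hI := card_block k hk
  set I := Finset.Icc (k * (k - 1) + 1) (k * (k + 1)) with hIdef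
  rw [Finset.sum_congr rfl (ha k hk), Finset.sum_ite, Finset.sum_const, Finset.sum_const]
  have hfilter : I.filter (· ∈ x k) = x k := by
    ext n
    simp only [Finset.mem_filter]
    exact ⟨fun h => h.2, fun h => ⟨hsub h, h⟩⟩
  have hfc : (I.filter (· ∈ x k)).card = k := by rw [hfilter, hcard]
  have hnc : (I.filter (fun n => ¬ n ∈ x k)).card = k := by
    have := Finset.card_filter_add_card_filter_not (s := I) (p := (· ∈ x k))
    omega
  rw [hfc, hnc]
  simp [nsmul_eq_mul]
  ring

include ha in
lemma block_abs_sum (k : ℕ) (hk : 1 ≤ k) :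
    ∑ n ∈ Finset.Icc (k * (k - 1) + 1) (k * (k + 1)), |a n| = 2 / (k : ℝ) := by
  rw [Finset.sum_congr rfl (abs_block x a ha k hk), Finset.sum_const, card_block k hk]
  have hk0 : (k:ℝ) ≠ 0 := by positivity
  rw [nsmul_eq_mul]
  push_cast
  field_simp

include hx ha ha0 in
lemma S_end (k : ℕ) : ∑ n ∈ Finset.range (k * (k + 1) + 1), a n = 0 := by
  induction k with
  | zero => simpa using ha0
  | succ k ih =>
    have h1 : k * (k + 1) + 1 ≤ (k+1) * (k + 2) + 1 := by nlinarith
    rw [Finset.range_eq_Ico, ← Finset.sum_Ico_consecutive _ (Nat.zero_le _) h1,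
      ← Finset.range_eq_Ico, ih]
    have h2 : Finset.Ico (k * (k + 1) + 1) ((k+1) * (k + 2) + 1)
        = Finset.Icc ((k+1) * ((k+1) - 1) + 1) ((k+1) * ((k+1) + 1)) := by
      rw [Finset.Ico_add_one_right_eq_Icc]
      congr 2
      · simp [Nat.mul_comm]
    rw [h2, block_sum x a hx ha (k+1) (by omega)]
    ring

include hx ha ha0 in
lemma T_end (k : ℕ) : ∑ n ∈ Finset.range (k * (k + 1) + 1), |a n|
    = ∑ j ∈ Finset.range k, 2 / ((j : ℝ) + 1) := by
  induction k with
  | zero => simpa using ha0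
  | succ k ih =>
    have h1 : k * (k + 1) + 1 ≤ (k+1) * (k + 2) + 1 := by nlinarith
    rw [Finset.range_eq_Ico, ← Finset.sum_Ico_consecutive _ (Nat.zero_le _) h1,
      ← Finset.range_eq_Ico, ih]
    have h2 : Finset.Ico (k * (k + 1) + 1) ((k+1) * (k + 2) + 1)
        = Finset.Icc ((k+1) * ((k+1) - 1) + 1) ((k+1) * ((k+1) + 1)) := by
      rw [Finset.Ico_add_one_right_eq_Icc]
      congr 2
      · simp [Nat.mul_comm]
    rw [h2, block_abs_sum x a ha (k+1) (by omega), Finset.sum_range_succ]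
    push_cast
    ring

lemma exists_block (m : ℕ) (hm : 1 ≤ m) :
    ∃ k, 1 ≤ k ∧ k * (k - 1) < m ∧ m ≤ k * (k + 1) := by
  induction m with
  | zero => omega
  | succ m ih =>
    rcases Nat.eq_or_lt_of_le hm with h | h
    · exact ⟨1, by omega, by omega, by omega⟩
    · obtain ⟨k, hk1, hkl, hku⟩ := ih (by omega)
      rcases Nat.lt_or_ge m (k * (k + 1)) with h2 | h2
      · exact ⟨k, hk1, by omega, by omega⟩
      · refine ⟨k + 1, by omega, ?_, ?_⟩
        · have : (k + 1) * (k + 1 - 1) = k * (k + 1) := by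
            simp [Nat.mul_comm]
          omega
        · have : (k + 1) * (k + 1 + 1) = k * (k + 1) + 2 * (k + 1) := by ring
          omega

include hx ha ha0 in
lemma S_bound (k : ℕ) (hk : 1 ≤ k) (m : ℕ) (hml : k * (k - 1) < m) (hmu : m ≤ k * (k + 1)) :
    |∑ n ∈ Finset.range m, a n| ≤ 2 / (k : ℝ) := by
  have hstart : ∑ n ∈ Finset.range (k * (k - 1) + 1), a n = 0 := by
    have := S_end x a hx ha0 ha (k - 1)
    have he : (k - 1) * (k - 1 + 1) = k * (k - 1) := by
      obtain ⟨j, rfl⟩ := Nat.exists_eq_add_of_le hk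
      have h0 : 1 + j - 1 = j := by omega
      rw [h0]
      ring
    rwa [he] at this
  have hsplit : ∑ n ∈ Finset.range m, a n
      = ∑ n ∈ Finset.range (k * (k - 1) + 1), a n
        + ∑ n ∈ Finset.Ico (k * (k - 1) + 1) m, a n := by
    rw [Finset.range_eq_Ico, Finset.range_eq_Ico]
    exact (Finset.sum_Ico_consecutive a (Nat.zero_le _)
      (show k * (k - 1) + 1 ≤ m by omega)).symm
  rw [hsplit, hstart, zero_add]
  calc |∑ n ∈ Finset.Ico (k * (k - 1) + 1) m, a n|
      ≤ ∑ n ∈ Finset.Ico (k * (k - 1) + 1) m, |a n| := Finset.abs_sum_le_sum_abs _ _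
    _ = ∑ n ∈ Finset.Ico (k * (k - 1) + 1) m, 1 / (k : ℝ) ^ 2 := by
        refine Finset.sum_congr rfl fun n hn => ?_
        rw [Finset.mem_Ico] at hn
        exact abs_block x a ha k hk n (Finset.mem_Icc.mpr ⟨hn.1, by omega⟩)
    _ = ((m - (k * (k - 1) + 1) : ℕ) : ℝ) * (1 / (k : ℝ) ^ 2) := by
        rw [Finset.sum_const, Nat.card_Ico, nsmul_eq_mul]
    _ ≤ (2 * k : ℝ) * (1 / (k : ℝ) ^ 2) := by
        apply mul_le_mul_of_nonneg_right _ (by positivity)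
        have hc : m - (k * (k - 1) + 1) ≤ 2 * k := by
          obtain ⟨j, rfl⟩ := Nat.exists_eq_add_of_le hk
          have : (1 + j) * (1 + j + 1) = (1 + j) * ((1 + j) - 1) + 2 * (1 + j) := by
            have h1 : (1 + j) - 1 = j := by omega
            rw [h1]; ring
          omega
        exact_mod_cast Nat.cast_le.mpr hc
    _ = 2 / (k : ℝ) := by
        have hk0 : (k:ℝ) ≠ 0 := by positivity
        field_simp

end Aux

theorem stmt7 (x : ℕ → Finset ℕ) (a : ℕ → ℝ)
    (hx : ∀ k, 1 ≤ k → x k ⊆ Finset.Icc (k * (k - 1) + 1) (k * (k + 1)) ∧ (x k).card = k)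
    (ha0 : a 0 = 0)
    (ha : ∀ k, 1 ≤ k → ∀ n ∈ Finset.Icc (k * (k - 1) + 1) (k * (k + 1)),
      a n = if n ∈ x k then 1 / (k : ℝ) ^ 2 else -1 / (k : ℝ) ^ 2) :
    Tendsto (fun m => ∑ n ∈ Finset.range m, a n) atTop (𝓝 0) ∧
    Tendsto (fun m => ∑ n ∈ Finset.range m, |a n|) atTop atTop := by
  constructor
  · rw [Metric.tendsto_atTop]
    intro ε hε
    obtain ⟨K, hK⟩ := exists_nat_gt (2 / ε)
    refine ⟨K * (K + 1) + 1, fun m hm => ?_⟩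
    obtain ⟨k, hk1, hkl, hku⟩ := exists_block m (by omega)
    have hKk : K < k := by
      by_contra h
      push_neg at h
      have : k * (k + 1) ≤ K * (K + 1) := Nat.mul_le_mul h (by omega)
      omega
    have hb := S_bound x a hx ha0 ha k hk1 m hkl hku
    rw [Real.dist_eq, sub_zero]
    refine lt_of_le_of_lt hb ?_
    have hkR : (2:ℝ) / ε < (k : ℝ) := lt_trans hK (by exact_mod_cast hKk)
    rw [div_lt_iff₀ (by positivity : (0:ℝ) < (k:ℝ))]
    have h2 := (div_lt_iff₀ hε).mp hkR
    linarith
  · apply tendsto_atTop_atTop_of_monotone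
    · intro m m' hmm
      apply Finset.sum_le_sum_of_subset_of_nonneg (Finset.range_subset_range.mpr hmm)
      intro i _ _
      exact abs_nonneg _
    · intro b
      obtain ⟨k, hk⟩ :=
        (Real.tendsto_sum_range_one_div_nat_succ_atTop.eventually_ge_atTop (b / 2)).exists
      refine ⟨k * (k + 1) + 1, ?_⟩
      rw [T_end x a hx ha0 ha k]
      have h2 : ∑ j ∈ Finset.range k, 2 / ((j : ℝ) + 1)
          = 2 * ∑ i ∈ Finset.range k, (1 / ((i : ℝ) + 1)) := by
        rw [Finset.mul_sum]
        refine Finset.sum_congr rfl fun i _ => ?_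
        ring
      rw [h2]
      linarith
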